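/- Let k be an algebraically closed field, let m, n be positive integers, and let A be an n×n integer matrix with A^m = 1 and det(A − 1) ≠ 0 (as an integer). Then: (i) the integer matrix 1 + A + A² + ⋯ + A^{m−1} is zero; and (ii) the group homomorphism (kˣ)^n → (kˣ)^n sending t to t · φ_A(t)⁻¹ is surjective, i.e. every element of (kˣ)^n has the form t · φ_A(t)⁻¹ for some t. -/

import Mathlib

def torusEndo {k : Type*} [Field k] {n : ℕ} (A : Matrix (Fin n) (Fin n) ℤ)
    (t : Fin n → kˣ) : Fin n → kˣ :=
  fun i => ∏ j, (t j) ^ (A i j)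

private lemma zpow_sum' {G : Type*} [CommGroup G] {α : Type*} (x : G) (s : Finset α)
    (f : α → ℤ) : x ^ (∑ a ∈ s, f a) = ∏ a ∈ s, x ^ f a := by
  induction s using Finset.cons_induction with
  | empty => simp
  | cons a s ha ih => simp [zpow_add, ih]

private lemma torusEndo_mul {k : Type*} [Field k] {n : ℕ} (B A : Matrix (Fin n) (Fin n) ℤ)
    (t : Fin n → kˣ) : torusEndo (B * A) t = torusEndo B (torusEndo A t) := by
  funext i
  simp only [torusEndo, Matrix.mul_apply]
  simp only [zpow_sum']
  simp only [← Finset.prod_zpow, ← zpow_mul]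
  rw [Finset.prod_comm]
  exact Finset.prod_congr rfl fun j _ => Finset.prod_congr rfl fun x _ => by rw [mul_comm]

private lemma exists_zpow_eq {k : Type*} [Field k] [IsAlgClosed k] {d : ℤ} (hd : d ≠ 0)
    (u : kˣ) : ∃ v : kˣ, v ^ d = u := by
  obtain ⟨z, hz⟩ := IsAlgClosed.exists_pow_nat_eq (u : k) (Int.natAbs_pos.mpr hd)
  have hz0 : z ≠ 0 := by
    rintro rfl
    simp [zero_pow (Int.natAbs_ne_zero.mpr hd)] at hz
    exact u.ne_zero hz.symm
  set v : kˣ := Units.mk0 z hz0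
  have hv : v ^ d.natAbs = u := by
    ext; push_cast; simpa [v] using hz
  rcases d.natAbs_eq with h | h
  · exact ⟨v, by rw [h]; exact_mod_cast hv⟩
  · refine ⟨v⁻¹, ?_⟩
    rw [h, zpow_neg, zpow_natCast, ← hv]
    simp

theorem torus_sub_surjective_of_finite_fixed_points
    (k : Type*) [Field k] [IsAlgClosed k] (m n : ℕ) (hm : 0 < m) (hn : 0 < n)
    (A : Matrix (Fin n) (Fin n) ℤ) (hA : A ^ m = 1) (hdet : (A - 1).det ≠ 0) :
    (∑ i ∈ Finset.range m, A ^ i = 0) ∧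
      Function.Surjective (fun t : Fin n → kˣ => t * (torusEndo A t)⁻¹) := by
  constructor
  · have h1 : (∑ i ∈ Finset.range m, A ^ i) * (A - 1) = A ^ m - 1 := geom_sum_mul A m
    rw [hA, sub_self] at h1
    have h2 : (∑ i ∈ Finset.range m, A ^ i) * ((A - 1) * (A - 1).adjugate) = 0 := by
      rw [← mul_assoc, h1, zero_mul]
    rw [Matrix.mul_adjugate, Matrix.mul_smul, mul_one] at h2
    exact (smul_eq_zero.mp h2).resolve_left hdet
  · -- the map is torusEndo (1 - A)
    have key : ∀ t : Fin n → kˣ, t * (torusEndo A t)⁻¹ = torusEndo (1 - A) t := by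
      intro t
      funext i
      simp only [torusEndo, Pi.mul_apply, Pi.inv_apply, Matrix.sub_apply, Matrix.one_apply]
      rw [← Finset.prod_inv_distrib]
      have : t i = ∏ j, (t j) ^ (if i = j then (1:ℤ) else 0) := by
        simp [Finset.prod_ite_eq]
      rw [this, ← Finset.prod_mul_distrib]
      refine Finset.prod_congr rfl fun j _ => ?_
      rw [zpow_sub]
    intro s
    set d : ℤ := (1 - A).det with hd
    have hd0 : d ≠ 0 := by
      rw [hd, show (1 : Matrix (Fin n) (Fin n) ℤ) - A = -(A - 1) by rw [neg_sub], Matrix.det_neg]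
      simpa using hdet
    choose r hr using fun i => exists_zpow_eq (k := k) hd0 (s i)
    refine ⟨torusEndo (1 - A).adjugate r, ?_⟩
    dsimp only
    rw [key, ← torusEndo_mul, Matrix.mul_adjugate]
    funext i
    simp only [torusEndo, Matrix.smul_apply, Matrix.one_apply, smul_eq_mul]
    rw [show (fun j => r j ^ (d * if i = j then (1:ℤ) else 0)) = fun j => (r j ^ d) ^ (if i = j then (1:ℤ) else 0) from funext fun j => by rw [← zpow_mul]]
    simp only [hr]
    simp [Finset.prod_ite_eq]
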